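/- Let C ∈ (0,1) and h(x) = C x (1−x)/(1 − C x). Then the maximum value of h on [0,1] equals h(x*) = (1 − √(1−C))² / C, where x* = 1/(1 + √(1−C)). Equivalently, with C = 1 − e^{−1/λ}, max_x h(x) = (1 − e^{−1/(2λ)})² / (1 − e^{−1/λ}) = (1 − e^{−1/(2λ)})/(1 + e^{−1/(2λ)}). -/
import Mathlib


open Set

theorem stmt_15 (C : ℝ) (hC : C ∈ Ioo (0:ℝ) 1)
    (h : ℝ → ℝ) (hh : ∀ x, h x = C * x * (1 - x) / (1 - C * x))
    (xstar : ℝ) (hx : xstar = 1 / (1 + Real.sqrt (1 - C))) :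
    (∀ x ∈ Icc (0:ℝ) 1, h x ≤ h xstar)
    ∧ h xstar = (1 - Real.sqrt (1 - C))^2 / C
    ∧ (∀ lam : ℝ, 0 < lam → C = 1 - Real.exp (-1 / lam) →
        h xstar = (1 - Real.exp (-1 / (2 * lam)))^2 / (1 - Real.exp (-1 / lam))
        ∧ h xstar = (1 - Real.exp (-1 / (2 * lam))) / (1 + Real.exp (-1 / (2 * lam)))) := by
  obtain ⟨hC0, hC1⟩ := hC
  set s := Real.sqrt (1 - C) with hs
  have hs2 : s ^ 2 = 1 - C := Real.sq_sqrt (by linarith)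
  have hs0 : 0 < s := Real.sqrt_pos.mpr (by linarith)
  have hs1 : s < 1 := by nlinarith
  have h1s : (0:ℝ) < 1 + s := by linarith
  have hxv : h xstar = (1 - s) / (1 + s) := by
    rw [hh, hx]
    have key : 1 - C * (1 / (1 + s)) = s := by
      field_simp
      nlinarith
    rw [key, div_eq_div_iff (ne_of_gt hs0) (ne_of_gt h1s)]
    field_simp
    nlinarith
  refine ⟨?_, ?_, ?_⟩
  · rintro x ⟨hx0, hx1⟩
    rw [hh, hxv]
    have hdx : 0 < 1 - C * x := by nlinarith
    rw [div_le_div_iff₀ hdx h1s]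
    nlinarith [sq_nonneg ((1 + s) * x - 1)]
  · rw [hxv, div_eq_div_iff (ne_of_gt h1s) (ne_of_gt hC0)]
    nlinarith
  · intro lam hlam hClam
    set e := Real.exp (-1 / (2 * lam)) with he
    have he0 : 0 < e := Real.exp_pos _
    have he2 : e ^ 2 = Real.exp (-1 / lam) := by
      rw [he, ← Real.exp_nat_mul]
      norm_num
      ring_nf
    have hse : s = e := by
      rw [hs, hClam]
      have : (1:ℝ) - (1 - Real.exp (-1/lam)) = e ^ 2 := by rw [he2]; ring
      rw [this, Real.sqrt_sq he0.le]
    have he1 : e < 1 := by rw [← hse]; exact hs1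
    constructor
    · rw [hxv, hse, ← he2]
      rw [div_eq_div_iff (by nlinarith : (1:ℝ)+e ≠ 0) (by nlinarith : 1 - e^2 ≠ 0)]
      ring
    · rw [hxv, hse]
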